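/- For a real sequence s_{-2}, s_{-1}, s_0, ..., with Hankel determinants Δ_{p,k} = det[(s_{p+i+j})_{0 ≤ i,j ≤ k-1}], one has Δ_{0,k}·Δ_{-2,k} − Δ_{0,k-1}·Δ_{-2,k+1} = Δ_{-1,k}² for all k ≥ 1. -/

import Mathlib

open Matrix Equiv Sum Polynomial

/-- Hankel determinant `Δ_{p,k}` of a doubly-infinite real sequence:
the determinant of the `k × k` matrix with `(i,j)` entry `s (p + i + j)`.
By convention `Δ_{p,0} = 1` (determinant of the empty matrix). -/
noncomputable def hankelDet (s : ℤ → ℝ) (p : ℤ) (k : ℕ) : ℝ :=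
  (Matrix.of fun i j : Fin k => s (p + (i : ℕ) + (j : ℕ))).det


private lemma sign_sq {α : Type*} [DecidableEq α] [Fintype α] (σ : Equiv.Perm α) :
    ((Equiv.Perm.sign σ : ℤ) : ℝ) * ((Equiv.Perm.sign σ : ℤ) : ℝ) = 1 := by
  have h1 : ((Equiv.Perm.sign σ : ℤ)) * ((Equiv.Perm.sign σ : ℤ)) = ((1 : ℤˣ) : ℤ) := by
    rw [← Units.val_mul, Int.units_mul_self]
  rw [Units.val_one] at h1
  exact_mod_cast h1

/-- Equiv putting the last index of `Fin (n+1)` apart. -/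
private def eA (n : ℕ) : (Fin n ⊕ Fin 1) ≃ Fin (n + 1) where
  toFun := Sum.elim Fin.castSucc (fun _ => Fin.last n)
  invFun j := if h : (j : ℕ) < n then Sum.inl ⟨j, h⟩ else Sum.inr 0
  left_inv := by
    rintro (i | j)
    · simp [i.is_lt]
    · have : j = 0 := Subsingleton.elim _ _
      simp [this]
  right_inv := by
    intro j
    by_cases h : (j : ℕ) < n <;> simp [h, Fin.ext_iff, Fin.last]
    omega
  
/-- Equiv putting the first index of `Fin (n+1)` apart. -/
private def eB (n : ℕ) : (Fin n ⊕ Fin 1) ≃ Fin (n + 1) where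
  toFun := Sum.elim Fin.succ (fun _ => 0)
  invFun j := if h : (j : ℕ) = 0 then Sum.inr 0 else Sum.inl ⟨(j : ℕ) - 1, by omega⟩
  left_inv := by
    rintro (i | j)
    · simp [Fin.ext_iff]
    · have : j = 0 := Subsingleton.elim _ _
      simp [this]
  right_inv := by
    intro j
    by_cases h : (j : ℕ) = 0
    · simp [h, Fin.ext_iff]
    · simp [h, Fin.ext_iff]
      omega

/-- Equiv putting the first and last indices of `Fin (n+2)` apart. -/
private def eD (n : ℕ) : (Fin n ⊕ Fin 2) ≃ Fin (n + 2) :=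
  (Equiv.sumCongr (Equiv.refl (Fin n)) (finSumFinEquiv (m := 1) (n := 1)).symm).trans
    ((Equiv.sumAssoc (Fin n) (Fin 1) (Fin 1)).symm.trans
      ((Equiv.sumCongr (eB n) (Equiv.refl (Fin 1))).trans (eA (n + 1))))

private lemma eA_inl {n : ℕ} (i : Fin n) : eA n (inl i) = i.castSucc := rfl
private lemma eA_inr {n : ℕ} (a : Fin 1) : eA n (inr a) = Fin.last n := rfl
private lemma eB_inl {n : ℕ} (i : Fin n) : eB n (inl i) = i.succ := rfl
private lemma eB_inr {n : ℕ} (a : Fin 1) : eB n (inr a) = 0 := rfl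
private lemma eD_inl {n : ℕ} (i : Fin n) : eD n (inl i) = i.succ.castSucc := rfl
private lemma eD_inr0 {n : ℕ} : eD n (inr 0) = 0 := by
  have h : (Fin.addCases inl inr : Fin (1 + 1) → Fin 1 ⊕ Fin 1) 0 = inl 0 := by decide
  simp [eD, eA, eB, finSumFinEquiv, h]
private lemma eD_inr1 {n : ℕ} : eD n (inr 1) = Fin.last (n + 1) := by
  have h : (Fin.addCases inl inr : Fin (1 + 1) → Fin 1 ⊕ Fin 1) 1 = inr 0 := by decide
  simp [eD, eA, eB, finSumFinEquiv, h]

/-- Determinant of a matrix with an `n × n` block `A` singled out by equivs `e` (rows)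
and `f` (columns), in terms of the Schur complement. -/
private lemma det_aux1 {n : ℕ} (A : Matrix (Fin n) (Fin n) ℝ) [Invertible A]
    (X : Matrix (Fin (n + 1)) (Fin (n + 1)) ℝ) (e f : (Fin n ⊕ Fin 1) ≃ Fin (n + 1))
    (hA : ∀ i j, X (e (inl i)) (f (inl j)) = A i j) :
    X.det = ((Equiv.Perm.sign (f.trans e.symm) : ℤ) : ℝ) *
      (A.det * (X (e (inr 0)) (f (inr 0)) -
        (fun j => X (e (inr 0)) (f (inl j))) ⬝ᵥ
          (⅟A *ᵥ fun i => X (e (inl i)) (f (inr 0))))) := by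
  set σ : Equiv.Perm (Fin n ⊕ Fin 1) := f.trans e.symm with hσ
  have hsq : ((Equiv.Perm.sign σ : ℤ) : ℝ) * ((Equiv.Perm.sign σ : ℤ) : ℝ) = 1 :=
    sign_sq σ
  have key : (X.submatrix e f).det = ((Equiv.Perm.sign σ : ℤ) : ℝ) * X.det := by
    have h1 : X.submatrix e f = (X.submatrix e e).submatrix id σ := by
      ext i j
      simp [hσ, Matrix.submatrix_apply]
    rw [h1, Matrix.det_permute', Matrix.det_submatrix_equiv_self]
  have h2 : X.submatrix e f =
      Matrix.fromBlocks A (Matrix.of fun i (_ : Fin 1) => X (e (inl i)) (f (inr 0)))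
        (Matrix.of fun (_ : Fin 1) j => X (e (inr 0)) (f (inl j)))
        (Matrix.of fun (_ : Fin 1) (_ : Fin 1) => X (e (inr 0)) (f (inr 0))) := by
    ext (i | a) (j | b)
    · simp [hA]
    · have : b = 0 := Subsingleton.elim _ _
      simp [this]
    · have : a = 0 := Subsingleton.elim _ _
      simp [this]
    · have ha : a = 0 := Subsingleton.elim _ _
      have hb : b = 0 := Subsingleton.elim _ _
      simp [ha, hb]
  have h3 : (X.submatrix e f).det = A.det * (X (e (inr 0)) (f (inr 0)) -
      (fun j => X (e (inr 0)) (f (inl j))) ⬝ᵥ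
        (⅟A *ᵥ fun i => X (e (inl i)) (f (inr 0)))) := by
    rw [h2, Matrix.det_fromBlocks₁₁, Matrix.det_fin_one]
    congr 1
    simp only [Matrix.sub_apply, Matrix.mul_apply, Matrix.of_apply, Matrix.mulVec,
      dotProduct, Finset.sum_mul, Finset.mul_sum, mul_assoc]
    rw [Finset.sum_comm]
  have := key
  rw [h3] at this
  calc X.det = (((Equiv.Perm.sign σ : ℤ) : ℝ) * ((Equiv.Perm.sign σ : ℤ) : ℝ)) * X.det := by
        rw [hsq, one_mul]
    _ = _ := by rw [mul_assoc, ← key, h3]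

/-- Determinant of a matrix with an `n × n` block `A` singled out by an equiv `e`, the
complement being `2 × 2`, in terms of the Schur complement. -/
private lemma det_aux2 {n : ℕ} (A : Matrix (Fin n) (Fin n) ℝ) [Invertible A]
    (X : Matrix (Fin (n + 2)) (Fin (n + 2)) ℝ) (e : (Fin n ⊕ Fin 2) ≃ Fin (n + 2))
    (hA : ∀ i j, X (e (inl i)) (e (inl j)) = A i j)
    (g : Fin 2 → Fin 2 → ℝ)
    (hg : ∀ a b, g a b = X (e (inr a)) (e (inr b)) -
      (fun j => X (e (inr a)) (e (inl j))) ⬝ᵥ (⅟A *ᵥ fun i => X (e (inl i)) (e (inr b)))) :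
    X.det = A.det * (g 0 0 * g 1 1 - g 0 1 * g 1 0) := by
  have h2 : X.submatrix e e =
      Matrix.fromBlocks A (Matrix.of fun i (b : Fin 2) => X (e (inl i)) (e (inr b)))
        (Matrix.of fun (a : Fin 2) j => X (e (inr a)) (e (inl j)))
        (Matrix.of fun (a : Fin 2) (b : Fin 2) => X (e (inr a)) (e (inr b))) := by
    ext (i | a) (j | b) <;> simp [hA]
  have h3 : ∀ a b, ((Matrix.of fun (a : Fin 2) (b : Fin 2) => X (e (inr a)) (e (inr b))) -
      (Matrix.of fun (a : Fin 2) j => X (e (inr a)) (e (inl j))) * ⅟A *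
        (Matrix.of fun i (b : Fin 2) => X (e (inl i)) (e (inr b)))) a b = g a b := by
    intro a b
    rw [hg]
    simp only [Matrix.sub_apply, Matrix.mul_apply, Matrix.of_apply, Matrix.mulVec,
      dotProduct, Finset.sum_mul, Finset.mul_sum, mul_assoc]
    rw [Finset.sum_comm]
  rw [← Matrix.det_submatrix_equiv_self e X, h2, Matrix.det_fromBlocks₁₁,
    Matrix.det_fin_two, h3, h3, h3, h3]

/-- Desnanot–Jacobi (Dodgson condensation), invertible-interior case. -/
private lemma jacobi_inv {n : ℕ} (M : Matrix (Fin (n + 2)) (Fin (n + 2)) ℝ)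
    (h : IsUnit (M.submatrix (fun i : Fin n => i.succ.castSucc)
      (fun i : Fin n => i.succ.castSucc)).det) :
    M.det * (M.submatrix (fun i : Fin n => i.succ.castSucc)
        (fun i : Fin n => i.succ.castSucc)).det =
      (M.submatrix Fin.succ Fin.succ).det * (M.submatrix Fin.castSucc Fin.castSucc).det -
      (M.submatrix Fin.succ Fin.castSucc).det * (M.submatrix Fin.castSucc Fin.succ).det := by
  set ι : Fin n → Fin (n + 2) := fun i => i.succ.castSucc with hι
  set A : Matrix (Fin n) (Fin n) ℝ := M.submatrix ι ι with hA
  letI : Invertible A := A.invertibleOfIsUnitDet h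
  set c : Fin 2 → Fin (n + 2) := ![0, Fin.last (n + 1)] with hc
  set g : Fin 2 → Fin 2 → ℝ := fun a b => M (c a) (c b) -
    (fun j => M (c a) (ι j)) ⬝ᵥ (⅟A *ᵥ fun i => M (ι i) (c b)) with hg
  set ε : ℝ := ((Equiv.Perm.sign ((eB n).trans (eA n).symm) : ℤ) : ℝ) with hε
  have hεsq : ε * ε = 1 := by
    rw [hε]; exact sign_sq _
  -- full determinant
  have hfull : M.det = A.det * (g 0 0 * g 1 1 - g 0 1 * g 1 0) := by
    refine det_aux2 A M (eD n) (fun i j => by simp [eD_inl, hA, hι]) g (fun a b => ?_)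
    fin_cases a <;> fin_cases b <;>
      simp [hg, eD_inl, eD_inr0, eD_inr1, hc, hA, hι]
  -- minor deleting row 0 and column 0
  have h00 : (M.submatrix Fin.succ Fin.succ).det = A.det * g 1 1 := by
    rw [det_aux1 A (M.submatrix Fin.succ Fin.succ) (eA n) (eA n)
      (fun i j => by simp [eA_inl, hA, hι, Fin.succ_castSucc, -Fin.castSucc_succ])]
    simp [eA_inl, eA_inr, hg, hc, hι, Fin.succ_castSucc, -Fin.castSucc_succ, Fin.succ_last]
  -- minor deleting last row and last column
  have hnn : (M.submatrix Fin.castSucc Fin.castSucc).det = A.det * g 0 0 := by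
    rw [det_aux1 A (M.submatrix Fin.castSucc Fin.castSucc) (eB n) (eB n)
      (fun i j => by simp [eB_inl, hA, hι, Fin.succ_castSucc, -Fin.castSucc_succ])]
    simp [eB_inl, eB_inr, hg, hc, hι, Fin.succ_castSucc, -Fin.castSucc_succ]
  -- minor deleting row 0 and last column
  have hsc : (M.submatrix Fin.succ Fin.castSucc).det = ε * (A.det * g 1 0) := by
    rw [det_aux1 A (M.submatrix Fin.succ Fin.castSucc) (eA n) (eB n)
      (fun i j => by simp [eA_inl, eB_inl, hA, hι, Fin.succ_castSucc, -Fin.castSucc_succ])]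
    rw [← hε]
    simp [eA_inl, eB_inl, eA_inr, eB_inr, hg, hc, hι, Fin.succ_castSucc, -Fin.castSucc_succ, Fin.succ_last]
  -- minor deleting last row and column 0
  have hcs : (M.submatrix Fin.castSucc Fin.succ).det = ε * (A.det * g 0 1) := by
    rw [det_aux1 A (M.submatrix Fin.castSucc Fin.succ) (eB n) (eA n)
      (fun i j => by simp [eA_inl, eB_inl, hA, hι, Fin.succ_castSucc, -Fin.castSucc_succ])]
    have hsgn : Equiv.Perm.sign ((eA n).trans (eB n).symm) =
        Equiv.Perm.sign ((eB n).trans (eA n).symm) := by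
      have : (eA n).trans (eB n).symm = ((eB n).trans (eA n).symm)⁻¹ := by
        ext x
        simp [Equiv.Perm.inv_def, Equiv.symm_trans_apply]
      rw [this, map_inv]
      exact inv_eq_of_mul_eq_one_left (Int.units_mul_self _)
    rw [hsgn, ← hε]
    simp [eA_inl, eB_inl, eA_inr, eB_inr, hg, hc, hι, Fin.succ_castSucc, -Fin.castSucc_succ, Fin.succ_last]
  rw [hfull, h00, hnn, hsc, hcs]
  linear_combination (A.det ^ 2 * g 1 0 * g 0 1) * hεsq

/-- Desnanot–Jacobi (Dodgson condensation), general case, by density. -/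
private lemma jacobi {n : ℕ} (M : Matrix (Fin (n + 2)) (Fin (n + 2)) ℝ) :
    M.det * (M.submatrix (fun i : Fin n => i.succ.castSucc)
        (fun i : Fin n => i.succ.castSucc)).det =
      (M.submatrix Fin.succ Fin.succ).det * (M.submatrix Fin.castSucc Fin.castSucc).det -
      (M.submatrix Fin.succ Fin.castSucc).det * (M.submatrix Fin.castSucc Fin.succ).det := by
  set ι : Fin n → Fin (n + 2) := fun i => i.succ.castSucc with hι
  have hinj : Function.Injective ι := by
    intro a b hab
    have := congrArg (fun x : Fin (n + 2) => (x : ℕ)) hab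
    simp only [hι, Fin.coe_castSucc, Fin.val_succ] at this
    exact Fin.ext (by omega)
  set Mf : ℝ → Matrix (Fin (n + 2)) (Fin (n + 2)) ℝ := fun t => M + t • 1 with hMf
  have hsub : ∀ t, (Mf t).submatrix ι ι = M.submatrix ι ι + t • 1 := by
    intro t
    ext i j
    simp [hMf, Matrix.submatrix_apply, Matrix.one_apply, hinj.eq_iff]
  set p : Polynomial ℝ := (-(M.submatrix ι ι)).charpoly with hp
  have hpne : p ≠ 0 := ((-(M.submatrix ι ι)).charpoly_monic).ne_zero
  have hpe : ∀ t : ℝ, p.eval t = (M.submatrix ι ι + t • 1).det := by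
    intro t
    rw [hp, show (-(M.submatrix ι ι)).charpoly
      = (Matrix.charmatrix (-(M.submatrix ι ι))).det from rfl]
    rw [← Polynomial.coe_evalRingHom, RingHom.map_det]
    congr 1
    ext i j
    rcases eq_or_ne i j with rfl | hij
    · simp only [RingHom.mapMatrix_apply, Matrix.map_apply, Matrix.charmatrix_apply_eq, Polynomial.coe_evalRingHom,
        Polynomial.eval_sub, Polynomial.eval_X, Polynomial.eval_C, Matrix.add_apply,
        Matrix.smul_apply, Matrix.one_apply_eq, Matrix.neg_apply, smul_eq_mul, mul_one]
      ring
    · simp [RingHom.mapMatrix_apply, Matrix.charmatrix_apply_ne _ _ _ hij, Matrix.one_apply, hij]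
  have hfin : {t : ℝ | ((Mf t).submatrix ι ι).det = 0}.Finite := by
    refine Set.Finite.subset (Polynomial.finite_setOf_isRoot hpne) (fun t ht => ?_)
    simp only [Set.mem_setOf_eq, hsub] at ht
    simp [Polynomial.IsRoot, hpe, ht]
  set F : ℝ → ℝ := fun t => (Mf t).det * ((Mf t).submatrix ι ι).det with hF
  set G : ℝ → ℝ := fun t =>
    ((Mf t).submatrix Fin.succ Fin.succ).det *
      ((Mf t).submatrix Fin.castSucc Fin.castSucc).det -
    ((Mf t).submatrix Fin.succ Fin.castSucc).det *
      ((Mf t).submatrix Fin.castSucc Fin.succ).det with hG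
  have hcont : ∀ {m : ℕ} (f g : Fin m → Fin (n + 2)),
      Continuous fun t => ((Mf t).submatrix f g).det := by
    intro m f g
    apply Continuous.matrix_det
    apply continuous_matrix
    intro i j
    simp only [hMf, Matrix.submatrix_apply, Matrix.add_apply, Matrix.smul_apply, smul_eq_mul]
    fun_prop
  have hdetc : Continuous fun t => (Mf t).det := by
    apply Continuous.matrix_det
    apply continuous_matrix
    intro i j
    simp only [hMf, Matrix.add_apply, Matrix.smul_apply, smul_eq_mul]
    fun_prop
  have hFc : Continuous F := hdetc.mul (hcont ι ι)
  have hGc : Continuous G := ((hcont _ _).mul (hcont _ _)).sub ((hcont _ _).mul (hcont _ _))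
  have heq : Set.EqOn F G {t : ℝ | ((Mf t).submatrix ι ι).det = 0}ᶜ := by
    intro t ht
    simp only [Set.mem_compl_iff, Set.mem_setOf_eq] at ht
    exact jacobi_inv (Mf t) (isUnit_iff_ne_zero.mpr ht)
  have hdense : Dense ({t : ℝ | ((Mf t).submatrix ι ι).det = 0}ᶜ) :=
    (hfin.countable).dense_compl ℝ
  have hFG : F = G := hFc.ext_on hdense hGc heq
  have h0 := congrFun hFG 0
  simpa [hF, hG, hMf] using h0

theorem stmt_4 (s : ℤ → ℝ) (k : ℕ) (hk : 1 ≤ k) :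
    hankelDet s 0 k * hankelDet s (-2) k -
      hankelDet s 0 (k - 1) * hankelDet s (-2) (k + 1) = (hankelDet s (-1) k) ^ 2 := by
  obtain ⟨n, rfl⟩ : ∃ n, k = n + 1 := ⟨k - 1, by omega⟩
  set M : Matrix (Fin (n + 2)) (Fin (n + 2)) ℝ :=
    Matrix.of fun i j : Fin (n + 2) => s (-2 + (i : ℕ) + (j : ℕ)) with hM
  have h1 : hankelDet s (-2) (n + 1 + 1) = M.det := rfl
  have h2 : hankelDet s 0 (n + 1) = (M.submatrix Fin.succ Fin.succ).det := by
    unfold hankelDet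
    congr 1
    ext i j
    simp only [Matrix.of_apply, Matrix.submatrix_apply, hM, Fin.val_succ]
    congr 1
    push_cast
    ring
  have h3 : hankelDet s (-2) (n + 1) = (M.submatrix Fin.castSucc Fin.castSucc).det := by
    unfold hankelDet
    congr 1
  have h4 : hankelDet s (-1) (n + 1) = (M.submatrix Fin.succ Fin.castSucc).det := by
    unfold hankelDet
    congr 1
    ext i j
    simp only [Matrix.of_apply, Matrix.submatrix_apply, hM, Fin.val_succ, Fin.coe_castSucc]
    congr 1
    push_cast
    ring
  have h5 : hankelDet s (-1) (n + 1) = (M.submatrix Fin.castSucc Fin.succ).det := by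
    unfold hankelDet
    congr 1
    ext i j
    simp only [Matrix.of_apply, Matrix.submatrix_apply, hM, Fin.val_succ, Fin.coe_castSucc]
    congr 1
    push_cast
    ring
  have h6 : hankelDet s 0 (n + 1 - 1) = (M.submatrix (fun i : Fin n => i.succ.castSucc)
      (fun i : Fin n => i.succ.castSucc)).det := by
    show hankelDet s 0 n = _
    unfold hankelDet
    congr 1
    ext i j
    simp only [Matrix.of_apply, Matrix.submatrix_apply, hM, Fin.coe_castSucc, Fin.val_succ]
    congr 1
    push_cast
    ring
  have hj := jacobi M
  have hdd : (M.submatrix Fin.succ Fin.castSucc).det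
      = (M.submatrix Fin.castSucc Fin.succ).det := h4 ▸ h5
  rw [h1, h2, h3, h6, sq, h4]
  linear_combination -hj - (M.submatrix Fin.succ Fin.castSucc).det * hdd
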